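/- arXiv:2509.07503 — 3 statements merged into one kernel-verified Lean document; each statement's English description precedes it below -/
import Mathlib

section
/- Let {f_k}_{k∈I} be a frame for a Hilbert space H and let {σ_j}_{j∈J} be a collection of subsets of I whose union is I. Then the family of closed subspaces W_j := closure of span{f_k : k ∈ σ_j}, j ∈ J, is an information packet for H. -/
open MeasureTheory

noncomputable section

/-- A family of closed subspaces of a Hilbert space is an information packet if every
vector admits an unconditionally convergent expansion with terms in the subspaces. -/
def InformationPacket {H : Type*} [NormedAddCommGroup H] [InnerProductSpace ℂ H]
    {J : Type*} (W : J → Submodule ℂ H) : Prop :=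
  (∀ j, IsClosed (W j : Set H)) ∧
    ∀ f : H, ∃ g : J → H, (∀ j, g j ∈ W j) ∧ HasSum g f

section Aux

local notation "⟪" x ", " y "⟫" => @inner ℂ _ _ x y

variable {H : Type*} [NormedAddCommGroup H] [InnerProductSpace ℂ H] [CompleteSpace H]
  {I : Type*} {f : I → H}

omit [CompleteSpace H] in
/-- Summability of the squared frame coefficients, from the frame bounds. -/
private lemma frame_summable_sq {A : ℝ} (hA : 0 < A)
    (hlow : ∀ x : H, A * ‖x‖ ^ 2 ≤ ∑' k, ‖(inner ℂ x (f k) : ℂ)‖ ^ 2) (x : H) :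
    Summable (fun k => ‖(inner ℂ x (f k) : ℂ)‖ ^ 2) := by
  by_cases hx : x = 0
  · simpa [hx] using summable_zero
  · by_contra hs
    have h0 : ∑' k, ‖(inner ℂ x (f k) : ℂ)‖ ^ 2 = 0 := tsum_eq_zero_of_not_summable hs
    have h1 := hlow x
    rw [h0] at h1
    have : 0 < A * ‖x‖ ^ 2 := mul_pos hA (pow_pos (norm_pos_iff.mpr hx) 2)
    linarith

omit [CompleteSpace H] in
/-- The finite synthesis (upper) bound coming from the Bessel inequality. -/
private lemma frame_synthesis_bound {B : ℝ} (hB : 0 < B)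
    (hsum : ∀ x : H, Summable (fun k => ‖(inner ℂ x (f k) : ℂ)‖ ^ 2))
    (hupper : ∀ x : H, ∑' k, ‖(inner ℂ x (f k) : ℂ)‖ ^ 2 ≤ B * ‖x‖ ^ 2)
    (c : I → ℂ) (G : Finset I) :
    ‖∑ k ∈ G, c k • f k‖ ^ 2 ≤ B * ∑ k ∈ G, ‖c k‖ ^ 2 := by
  classical
  set y := ∑ k ∈ G, c k • f k with hy
  have h1 : (⟪y, y⟫ : ℂ) = ∑ k ∈ G, c k * ⟪y, f k⟫ := by
    rw [hy, inner_sum]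
    exact Finset.sum_congr rfl fun k _ => inner_smul_right _ _ _
  have h2 : ‖y‖ ^ 2 ≤ ∑ k ∈ G, ‖c k‖ * ‖⟪y, f k⟫‖ := by
    calc ‖y‖ ^ 2 = Complex.re ⟪y, y⟫ := (inner_self_eq_norm_sq (𝕜 := ℂ) y).symm
    _ ≤ ‖(⟪y, y⟫ : ℂ)‖ := Complex.re_le_norm _
    _ ≤ ∑ k ∈ G, ‖c k * ⟪y, f k⟫‖ := by rw [h1]; exact norm_sum_le _ _
    _ = ∑ k ∈ G, ‖c k‖ * ‖⟪y, f k⟫‖ := by simp [norm_mul]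
  have hCS : (∑ k ∈ G, ‖c k‖ * ‖⟪y, f k⟫‖) ^ 2 ≤
      (∑ k ∈ G, ‖c k‖ ^ 2) * ∑ k ∈ G, ‖⟪y, f k⟫‖ ^ 2 :=
    Finset.sum_mul_sq_le_sq_mul_sq G _ _
  have h3 : ∑ k ∈ G, ‖⟪y, f k⟫‖ ^ 2 ≤ B * ‖y‖ ^ 2 :=
    le_trans (Summable.sum_le_tsum G (fun k _ => sq_nonneg _) (hsum y)) (hupper y)
  have h4 : (‖y‖ ^ 2) ^ 2 ≤ (∑ k ∈ G, ‖c k‖ ^ 2) * (B * ‖y‖ ^ 2) := by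
    calc (‖y‖ ^ 2) ^ 2 ≤ (∑ k ∈ G, ‖c k‖ * ‖⟪y, f k⟫‖) ^ 2 := by
          apply pow_le_pow_left₀ (sq_nonneg _) h2
    _ ≤ (∑ k ∈ G, ‖c k‖ ^ 2) * ∑ k ∈ G, ‖⟪y, f k⟫‖ ^ 2 := hCS
    _ ≤ (∑ k ∈ G, ‖c k‖ ^ 2) * (B * ‖y‖ ^ 2) := by
          apply mul_le_mul_of_nonneg_left h3
          exact Finset.sum_nonneg fun k _ => sq_nonneg _
  by_cases hy0 : ‖y‖ = 0
  · rw [hy0]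
    simpa using mul_nonneg hB.le (Finset.sum_nonneg fun k _ => sq_nonneg (‖c k‖))
  · have hypos : 0 < ‖y‖ ^ 2 := pow_pos (lt_of_le_of_ne (norm_nonneg _) (Ne.symm hy0)) 2
    nlinarith [h4]

/-- Synthesis summability: square-summable coefficients give an unconditionally
convergent series. -/
private lemma frame_synthesis_summable {B : ℝ} (hB : 0 < B)
    (hL2 : ∀ (c : I → ℂ) (G : Finset I), ‖∑ k ∈ G, c k • f k‖ ^ 2 ≤ B * ∑ k ∈ G, ‖c k‖ ^ 2)
    (c : I → ℂ) (hc : Summable (fun k => ‖c k‖ ^ 2)) :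
    Summable (fun k => c k • f k) := by
  rw [summable_iff_vanishing_norm]
  intro ε hε
  have hε2 : 0 < ε ^ 2 / B := by positivity
  obtain ⟨s, hs⟩ := summable_iff_vanishing_norm.mp hc (ε ^ 2 / B) hε2
  refine ⟨s, fun t ht => ?_⟩
  have h1 := hL2 c t
  have h2 : ∑ k ∈ t, ‖c k‖ ^ 2 < ε ^ 2 / B := by
    calc ∑ k ∈ t, ‖c k‖ ^ 2 ≤ ‖∑ k ∈ t, ‖c k‖ ^ 2‖ := le_abs_self _
    _ < ε ^ 2 / B := hs t ht
  have h3 : ‖∑ k ∈ t, c k • f k‖ ^ 2 < ε ^ 2 := by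
    calc ‖∑ k ∈ t, c k • f k‖ ^ 2 ≤ B * ∑ k ∈ t, ‖c k‖ ^ 2 := h1
    _ < B * (ε ^ 2 / B) := mul_lt_mul_of_pos_left h2 hB
    _ = ε ^ 2 := by field_simp
  nlinarith [norm_nonneg (∑ k ∈ t, c k • f k), hε]

/-- Frame reconstruction: every vector is the (unconditional) sum of a series of
multiples of the frame vectors. -/
private lemma frame_reconstruction {A B : ℝ} (hA : 0 < A) (hB : 0 < B)
    (hsumsq : ∀ x : H, Summable (fun k => ‖(inner ℂ x (f k) : ℂ)‖ ^ 2))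
    (hlow : ∀ x : H, A * ‖x‖ ^ 2 ≤ ∑' k, ‖(inner ℂ x (f k) : ℂ)‖ ^ 2)
    (hupper : ∀ x : H, ∑' k, ‖(inner ℂ x (f k) : ℂ)‖ ^ 2 ≤ B * ‖x‖ ^ 2) :
    ∀ x : H, ∃ u : H, HasSum (fun k => (⟪f k, u⟫ : ℂ) • f k) x := by
  have hL2 := frame_synthesis_bound hB hsumsq hupper
  have hL3 := frame_synthesis_summable hB hL2
  -- summability of the synthesis series with analysis coefficients
  have hsumx : ∀ u : H, Summable (fun k => (⟪f k, u⟫ : ℂ) • f k) := by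
    intro u
    apply hL3
    refine (hsumsq u).congr fun k => ?_
    rw [norm_inner_symm]
  -- the frame operator as a linear map
  set Slm : H →ₗ[ℂ] H :=
    { toFun := fun u => ∑' k, (⟪f k, u⟫ : ℂ) • f k
      map_add' := by
        intro u v
        rw [← Summable.tsum_add (hsumx u) (hsumx v)]
        apply tsum_congr
        intro k
        rw [inner_add_right, add_smul]
      map_smul' := by
        intro a u
        rw [RingHom.id_apply, ← Summable.tsum_const_smul a (hsumx u)]
        apply tsum_congr
        intro k
        rw [inner_smul_right, smul_smul]
      } with hSlm
  have hShas : ∀ u : H, HasSum (fun k => (⟪f k, u⟫ : ℂ) • f k) (Slm u) := fun u =>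
    (hsumx u).hasSum
  -- norm bound on partial sums
  have hpart : ∀ (u : H) (G : Finset I), ‖∑ k ∈ G, (⟪f k, u⟫ : ℂ) • f k‖ ≤ B * ‖u‖ := by
    intro u G
    have h1 := hL2 (fun k => (⟪f k, u⟫ : ℂ)) G
    have h2 : ∑ k ∈ G, ‖(⟪f k, u⟫ : ℂ)‖ ^ 2 ≤ B * ‖u‖ ^ 2 := by
      calc ∑ k ∈ G, ‖(⟪f k, u⟫ : ℂ)‖ ^ 2 = ∑ k ∈ G, ‖(⟪u, f k⟫ : ℂ)‖ ^ 2 :=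
            Finset.sum_congr rfl fun k _ => by rw [norm_inner_symm]
      _ ≤ ∑' k, ‖(⟪u, f k⟫ : ℂ)‖ ^ 2 := Summable.sum_le_tsum G (fun k _ => sq_nonneg _) (hsumsq u)
      _ ≤ B * ‖u‖ ^ 2 := hupper u
    have h3 : ‖∑ k ∈ G, (⟪f k, u⟫ : ℂ) • f k‖ ^ 2 ≤ (B * ‖u‖) ^ 2 := by
      calc ‖∑ k ∈ G, (⟪f k, u⟫ : ℂ) • f k‖ ^ 2 ≤ B * ∑ k ∈ G, ‖(⟪f k, u⟫ : ℂ)‖ ^ 2 := h1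
      _ ≤ B * (B * ‖u‖ ^ 2) := mul_le_mul_of_nonneg_left h2 hB.le
      _ = (B * ‖u‖) ^ 2 := by ring
    nlinarith [norm_nonneg (∑ k ∈ G, (⟪f k, u⟫ : ℂ) • f k), mul_nonneg hB.le (norm_nonneg u)]
  -- continuity
  have hbound : ∀ u : H, ‖Slm u‖ ≤ B * ‖u‖ := by
    intro u
    refine le_of_tendsto ((hShas u).norm) ?_
    exact Filter.Eventually.of_forall fun G => hpart u G
  -- bundle as a continuous linear map
  set Sc : H →L[ℂ] H := LinearMap.mkContinuous Slm B hbound with hSc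
  have hScapp : ∀ u, Sc u = Slm u := fun u => rfl
  -- coercivity: A‖u‖² ≤ re ⟪u, Sc u⟫
  have hcoer : ∀ u : H, A * ‖u‖ ^ 2 ≤ Complex.re (⟪u, Sc u⟫ : ℂ) := by
    intro u
    have h1 : HasSum (fun k => (⟪f k, u⟫ : ℂ) * ⟪u, f k⟫) (⟪u, Sc u⟫ : ℂ) := by
      have := (innerSL ℂ u).hasSum (hShas u)
      simpa [inner_smul_right, hScapp] using this
    have h2 : HasSum (fun k => ((‖(⟪u, f k⟫ : ℂ)‖ ^ 2 : ℝ) : ℂ)) (⟪u, Sc u⟫ : ℂ) := by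
      refine h1.congr_fun fun k => ?_
      rw [← inner_conj_symm u (f k), RCLike.norm_conj, Complex.ofReal_pow]
      exact (RCLike.mul_conj _).symm
    have h3 : HasSum (fun k => ‖(⟪u, f k⟫ : ℂ)‖ ^ 2) (Complex.re (⟪u, Sc u⟫ : ℂ)) := by
      simpa [← Complex.ofReal_pow] using Complex.reCLM.hasSum h2
    calc A * ‖u‖ ^ 2 ≤ ∑' k, ‖(⟪u, f k⟫ : ℂ)‖ ^ 2 := hlow u
    _ = Complex.re (⟪u, Sc u⟫ : ℂ) := h3.tsum_eq
  -- bounded below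
  have hbelow : ∀ u : H, A * ‖u‖ ≤ ‖Sc u‖ := by
    intro u
    by_cases hu : u = 0
    · simp [hu]
    · have h1 : A * ‖u‖ ^ 2 ≤ ‖u‖ * ‖Sc u‖ := by
        calc A * ‖u‖ ^ 2 ≤ Complex.re (⟪u, Sc u⟫ : ℂ) := hcoer u
        _ ≤ ‖(⟪u, Sc u⟫ : ℂ)‖ := Complex.re_le_norm _
        _ ≤ ‖u‖ * ‖Sc u‖ := norm_inner_le_norm _ _
      have hu' : 0 < ‖u‖ := norm_pos_iff.mpr hu
      nlinarith
  -- surjectivity of the frame operator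
  have hsurj : ∀ x : H, ∃ u : H, Sc u = x := by
    have hanti : AntilipschitzWith (A⁻¹.toNNReal) Sc := by
      apply ContinuousLinearMap.antilipschitz_of_bound
      intro u
      rw [Real.coe_toNNReal _ (by positivity), inv_mul_eq_div, le_div_iff₀ hA]
      linarith [hbelow u]
    have hclosed : IsClosed (Set.range Sc) := hanti.isClosed_range Sc.uniformContinuous
    set R : Submodule ℂ H := LinearMap.range (Sc : H →ₗ[ℂ] H) with hR
    have hRclosed : IsClosed (R : Set H) := by
      have : (R : Set H) = Set.range Sc := by
        ext y; simp [hR, LinearMap.mem_range]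
      rw [this]; exact hclosed
    have : CompleteSpace R := hRclosed.completeSpace_coe
    have horth : Rᗮ = ⊥ := by
      rw [Submodule.eq_bot_iff]
      intro y hy
      have h0 : (⟪Sc y, y⟫ : ℂ) = 0 := hy (Sc y) (LinearMap.mem_range_self _ y)
      have h1 : Complex.re (⟪y, Sc y⟫ : ℂ) = 0 := by
        rw [← inner_conj_symm, h0]; simp
      have h2 := hcoer y
      rw [h1] at h2
      have h3 : ‖y‖ ^ 2 = 0 := le_antisymm (by nlinarith [sq_nonneg ‖y‖]) (sq_nonneg _)
      exact norm_eq_zero.mp (sq_eq_zero_iff.mp h3)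
    have hRtop : R = ⊤ := Submodule.orthogonal_eq_bot_iff.mp horth
    intro x
    exact (hRtop ▸ Submodule.mem_top : x ∈ R)
  intro x
  obtain ⟨u, hu⟩ := hsurj x
  exact ⟨u, hu ▸ hShas u⟩

end Aux

theorem stmt2 {H : Type*} [NormedAddCommGroup H] [InnerProductSpace ℂ H] [CompleteSpace H]
    {I : Type*} [Countable I] {J : Type*} [Countable J] (f : I → H)
    (hframe : ∃ A B : ℝ, 0 < A ∧ 0 < B ∧ ∀ x : H,
      A * ‖x‖ ^ 2 ≤ ∑' k, ‖(inner ℂ x (f k) : ℂ)‖ ^ 2 ∧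
      ∑' k, ‖(inner ℂ x (f k) : ℂ)‖ ^ 2 ≤ B * ‖x‖ ^ 2)
    (σ : J → Set I) (hcover : (⋃ j, σ j) = Set.univ) :
    InformationPacket
      (fun j => (Submodule.span ℂ (f '' σ j)).topologicalClosure) := by
  obtain ⟨A, B, hA, hB, hAB⟩ := hframe
  have hlow : ∀ x : H, A * ‖x‖ ^ 2 ≤ ∑' k, ‖(inner ℂ x (f k) : ℂ)‖ ^ 2 := fun x => (hAB x).1
  have hupper : ∀ x : H, ∑' k, ‖(inner ℂ x (f k) : ℂ)‖ ^ 2 ≤ B * ‖x‖ ^ 2 := fun x => (hAB x).2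
  have hsumsq := frame_summable_sq hA hlow
  have hrecon := frame_reconstruction hA hB hsumsq hlow hupper
  -- a choice of index assignment
  have hchoice : ∀ k : I, ∃ j, k ∈ σ j := fun k =>
    Set.mem_iUnion.mp (hcover ▸ Set.mem_univ k)
  choose r hr using hchoice
  constructor
  · intro j
    exact Submodule.isClosed_topologicalClosure _
  · intro x
    obtain ⟨u, hu⟩ := hrecon x
    set c : I → H := fun k => (inner ℂ (f k) u : ℂ) • f k with hc
    refine ⟨fun j => ∑' k : r ⁻¹' {j}, c k, ?_, hu.tsum_fiberwise r⟩
    intro j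
    have hsub : Summable (fun k : r ⁻¹' {j} => c k) := hu.summable.subtype _
    refine (Submodule.isClosed_topologicalClosure _).mem_of_tendsto hsub.hasSum ?_
    refine Filter.Eventually.of_forall fun s => Submodule.sum_mem _ fun k _ => ?_
    have hk : r (k : I) = j := k.2
    have hmem : (k : I) ∈ σ j := by
      have := hr (k : I)
      rwa [hk] at this
    have hfk : f (k : I) ∈ f '' σ j := ⟨(k : I), hmem, rfl⟩
    exact Submodule.smul_mem _ _
      (Submodule.le_topologicalClosure _ (Submodule.subset_span hfk))
end
end

section
/- For a fusion frame {W_j, ω_j}_{j∈J}, the fusion frame operator S f := Σ_{j∈J} ω_j² P_j f is a bounded, bijective, self-adjoint, and positive operator on H, and the series defining S f converges unconditionally for every f ∈ H. -/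
open MeasureTheory

noncomputable section

/-- `P` is the orthogonal projection of `H` onto the closed subspace `K`. -/
def IsOrthoProjOn {H : Type*} [NormedAddCommGroup H] [InnerProductSpace ℂ H]
    (K : Submodule ℂ H) (P : H →L[ℂ] H) : Prop :=
  ∀ f : H, P f ∈ K ∧ f - P f ∈ Kᗮ

lemma ortho_inner_left {H : Type*} [NormedAddCommGroup H] [InnerProductSpace ℂ H]
    {K : Submodule ℂ H} {P : H →L[ℂ] H} (hP : IsOrthoProjOn K P) (f g : H) :
    (inner ℂ (P f) g : ℂ) = inner ℂ (P f) (P g) := by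
  have h := Submodule.inner_right_of_mem_orthogonal (hP f).1 (hP g).2
  rw [inner_sub_right, sub_eq_zero] at h
  exact h

lemma ortho_inner_sym {H : Type*} [NormedAddCommGroup H] [InnerProductSpace ℂ H]
    {K : Submodule ℂ H} {P : H →L[ℂ] H} (hP : IsOrthoProjOn K P) (f g : H) :
    (inner ℂ (P f) g : ℂ) = inner ℂ f (P g) := by
  rw [ortho_inner_left hP f g, ← inner_conj_symm (P f) (P g),
    ← ortho_inner_left hP g f, inner_conj_symm]

theorem stmt5 {H : Type*} [NormedAddCommGroup H] [InnerProductSpace ℂ H] [CompleteSpace H]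
    {J : Type*} [Countable J] (W : J → Submodule ℂ H) (hWc : ∀ j, IsClosed (W j : Set H))
    (ω : J → ℝ) (hω : ∀ j, 0 < ω j)
    (P : J → H →L[ℂ] H) (hP : ∀ j, IsOrthoProjOn (W j) (P j))
    (hfusion : ∃ A B : ℝ, 0 < A ∧ 0 < B ∧ ∀ f : H,
      A * ‖f‖ ^ 2 ≤ ∑' j, ω j ^ 2 * ‖P j f‖ ^ 2 ∧
      ∑' j, ω j ^ 2 * ‖P j f‖ ^ 2 ≤ B * ‖f‖ ^ 2) :
    ∃ S : H →L[ℂ] H,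
      (∀ f : H, HasSum (fun j => ((ω j : ℂ) ^ 2) • P j f) (S f)) ∧
      Function.Bijective S ∧
      (∀ f g : H, (inner ℂ (S f) g : ℂ) = inner ℂ f (S g)) ∧
      (∀ f : H, 0 ≤ (inner ℂ (S f) f : ℂ).re) := by
  obtain ⟨A, B, hA, hB, hf⟩ := hfusion
  -- summability of the real series
  have hsumreal : ∀ f : H, Summable (fun j => ω j ^ 2 * ‖P j f‖ ^ 2) := by
    intro f
    by_cases hf0 : f = 0
    · simp [hf0]
    · by_contra hns
      have h0 : ∑' j, ω j ^ 2 * ‖P j f‖ ^ 2 = 0 := tsum_eq_zero_of_not_summable hns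
      have h1 := (hf f).1
      rw [h0] at h1
      have hf' : 0 < ‖f‖ := norm_pos_iff.mpr hf0
      nlinarith [mul_pos hA (pow_pos hf' 2)]
  -- key finite estimate
  have key : ∀ (f : H) (G : Finset J),
      ‖∑ j ∈ G, ((ω j : ℂ) ^ 2) • P j f‖ ^ 2 ≤ B * ∑ j ∈ G, ω j ^ 2 * ‖P j f‖ ^ 2 := by
    intro f G
    set v := ∑ j ∈ G, ((ω j : ℂ) ^ 2) • P j f with hv
    have h1 : (‖v‖ : ℝ) ^ 2 = (inner ℂ v v : ℂ).re := (inner_self_eq_norm_sq (𝕜 := ℂ) v).symm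
    have h2 : (inner ℂ v v : ℂ) = ∑ j ∈ G, ((ω j : ℂ) ^ 2) * inner ℂ (P j f) v := by
      rw [hv, sum_inner]
      refine Finset.sum_congr rfl fun j _ => ?_
      rw [inner_smul_left]
      congr 1
      simp [← Complex.ofReal_pow]
    have h3 : ‖v‖ ^ 2 ≤ ∑ j ∈ G, (ω j * ‖P j f‖) * (ω j * ‖P j v‖) := by
      rw [h1, h2, Complex.re_sum]
      refine Finset.sum_le_sum fun j _ => ?_
      have he : (((ω j : ℂ) ^ 2) * inner ℂ (P j f) v).re
          = ω j ^ 2 * (inner ℂ (P j f) v : ℂ).re := by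
        simp [← Complex.ofReal_pow]
      rw [he]
      have h4 : (inner ℂ (P j f) v : ℂ).re ≤ ‖P j f‖ * ‖P j v‖ := by
        calc (inner ℂ (P j f) v : ℂ).re ≤ ‖(inner ℂ (P j f) v : ℂ)‖ := Complex.re_le_norm _
          _ = ‖(inner ℂ (P j f) (P j v) : ℂ)‖ := by rw [ortho_inner_left (hP j)]
          _ ≤ ‖P j f‖ * ‖P j v‖ := norm_inner_le_norm _ _
      have hω2 : (0:ℝ) ≤ ω j ^ 2 := sq_nonneg _
      nlinarith
    have h5 : (∑ j ∈ G, (ω j * ‖P j f‖) * (ω j * ‖P j v‖)) ^ 2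
        ≤ (∑ j ∈ G, (ω j * ‖P j f‖) ^ 2) * ∑ j ∈ G, (ω j * ‖P j v‖) ^ 2 :=
      Finset.sum_mul_sq_le_sq_mul_sq G _ _
    have h6 : ∑ j ∈ G, (ω j * ‖P j v‖) ^ 2 ≤ B * ‖v‖ ^ 2 := by
      calc ∑ j ∈ G, (ω j * ‖P j v‖) ^ 2 = ∑ j ∈ G, ω j ^ 2 * ‖P j v‖ ^ 2 := by
            refine Finset.sum_congr rfl fun j _ => by ring
        _ ≤ ∑' j, ω j ^ 2 * ‖P j v‖ ^ 2 :=
            Summable.sum_le_tsum G (fun j _ => by positivity) (hsumreal v)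
        _ ≤ B * ‖v‖ ^ 2 := (hf v).2
    have h7 : ∑ j ∈ G, (ω j * ‖P j f‖) ^ 2 = ∑ j ∈ G, ω j ^ 2 * ‖P j f‖ ^ 2 := by
      refine Finset.sum_congr rfl fun j _ => by ring
    by_cases hv0 : ‖v‖ = 0
    · rw [hv0]
      have : (0:ℝ) ≤ ∑ j ∈ G, ω j ^ 2 * ‖P j f‖ ^ 2 :=
        Finset.sum_nonneg fun j _ => by positivity
      nlinarith
    · have hv0' : 0 < ‖v‖ := lt_of_le_of_ne (norm_nonneg v) (Ne.symm hv0)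
      have hsum_nonneg : (0:ℝ) ≤ ∑ j ∈ G, (ω j * ‖P j f‖) * (ω j * ‖P j v‖) :=
        Finset.sum_nonneg fun j _ =>
          mul_nonneg (mul_nonneg (hω j).le (norm_nonneg _)) (mul_nonneg (hω j).le (norm_nonneg _))
      rw [h7] at h5
      have hF : (0:ℝ) ≤ ∑ j ∈ G, ω j ^ 2 * ‖P j f‖ ^ 2 :=
        Finset.sum_nonneg fun j _ => by positivity
      have c1 : ‖v‖ ^ 2 * ‖v‖ ^ 2 ≤ (∑ j ∈ G, (ω j * ‖P j f‖) * (ω j * ‖P j v‖)) ^ 2 := by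
        nlinarith
      have c2 : (∑ j ∈ G, (ω j * ‖P j f‖) * (ω j * ‖P j v‖)) ^ 2
          ≤ (∑ j ∈ G, ω j ^ 2 * ‖P j f‖ ^ 2) * (B * ‖v‖ ^ 2) :=
        h5.trans (mul_le_mul_of_nonneg_left h6 hF)
      have c3 : ‖v‖ ^ 2 * ‖v‖ ^ 2 ≤ (B * ∑ j ∈ G, ω j ^ 2 * ‖P j f‖ ^ 2) * ‖v‖ ^ 2 := by
        nlinarith
      have hvpos : 0 < ‖v‖ ^ 2 := pow_pos hv0' 2
      exact le_of_mul_le_mul_right c3 hvpos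
  -- summability of the vector series
  have hsumvec : ∀ f : H, Summable (fun j => ((ω j : ℂ) ^ 2) • P j f) := by
    intro f
    rw [summable_iff_vanishing]
    intro e he
    obtain ⟨ε, hε, hsub⟩ := Metric.mem_nhds_iff.mp he
    have h2 : (0:ℝ) < ε ^ 2 / B := by positivity
    obtain ⟨s, hs⟩ := (summable_iff_vanishing.mp (hsumreal f)) (Metric.ball 0 (ε ^ 2 / B))
      (Metric.ball_mem_nhds _ h2)
    refine ⟨s, fun t ht => hsub ?_⟩
    have h3 := hs t ht
    rw [Metric.mem_ball, Real.dist_eq, sub_zero] at h3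
    have h4 : ∑ j ∈ t, ω j ^ 2 * ‖P j f‖ ^ 2 < ε ^ 2 / B :=
      lt_of_le_of_lt (le_abs_self _) h3
    have h5 : ‖∑ j ∈ t, ((ω j : ℂ) ^ 2) • P j f‖ ^ 2 < ε ^ 2 := by
      calc ‖∑ j ∈ t, ((ω j : ℂ) ^ 2) • P j f‖ ^ 2
          ≤ B * ∑ j ∈ t, ω j ^ 2 * ‖P j f‖ ^ 2 := key f t
        _ < B * (ε ^ 2 / B) := by exact (mul_lt_mul_iff_right₀ hB).mpr h4
        _ = ε ^ 2 := by field_simp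
    rw [Metric.mem_ball, dist_zero_right]
    exact lt_of_pow_lt_pow_left₀ 2 hε.le h5
  -- the linear map
  set Slin : H →ₗ[ℂ] H :=
    { toFun := fun f => ∑' j, ((ω j : ℂ) ^ 2) • P j f
      map_add' := fun f g => by
        have h1 := (hsumvec f).hasSum
        have h2 := (hsumvec g).hasSum
        have h3 : HasSum (fun j => ((ω j : ℂ) ^ 2) • P j (f + g))
            ((∑' j, ((ω j : ℂ) ^ 2) • P j f) + ∑' j, ((ω j : ℂ) ^ 2) • P j g) := by
          simpa [map_add, smul_add] using h1.add h2
        exact h3.tsum_eq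
      map_smul' := fun c f => by
        have h1 := (hsumvec f).hasSum
        have h3 : HasSum (fun j => ((ω j : ℂ) ^ 2) • P j (c • f))
            (c • ∑' j, ((ω j : ℂ) ^ 2) • P j f) := by
          simpa [_root_.map_smul, smul_comm c] using h1.const_smul c
        exact h3.tsum_eq } with hSlin
  have hbound : ∀ f : H, ‖Slin f‖ ≤ B * ‖f‖ := by
    intro f
    have hsq : ‖Slin f‖ ^ 2 ≤ (B * ‖f‖) ^ 2 := by
      have htend : Filter.Tendsto (fun G : Finset J => ‖∑ j ∈ G, ((ω j : ℂ) ^ 2) • P j f‖ ^ 2)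
          Filter.atTop (nhds (‖Slin f‖ ^ 2)) :=
        ((hsumvec f).hasSum.norm).pow 2
      refine le_of_tendsto htend (Filter.Eventually.of_forall fun G => ?_)
      calc ‖∑ j ∈ G, ((ω j : ℂ) ^ 2) • P j f‖ ^ 2
          ≤ B * ∑ j ∈ G, ω j ^ 2 * ‖P j f‖ ^ 2 := key f G
        _ ≤ B * ∑' j, ω j ^ 2 * ‖P j f‖ ^ 2 := by
            have := Summable.sum_le_tsum G (fun j _ => by positivity) (hsumreal f)
            nlinarith
        _ ≤ B * (B * ‖f‖ ^ 2) := by nlinarith [(hf f).2]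
        _ = (B * ‖f‖) ^ 2 := by ring
    have := Real.sqrt_le_sqrt hsq
    rwa [Real.sqrt_sq (norm_nonneg _), Real.sqrt_sq (by positivity)] at this
  set S : H →L[ℂ] H := Slin.mkContinuous B hbound with hSdef
  have hS : ∀ f : H, HasSum (fun j => ((ω j : ℂ) ^ 2) • P j f) (S f) :=
    fun f => (hsumvec f).hasSum
  -- self-adjointness
  have hadj : ∀ f g : H, (inner ℂ (S f) g : ℂ) = inner ℂ f (S g) := by
    intro f g
    have h1 : HasSum (fun j => (inner ℂ g (((ω j : ℂ) ^ 2) • P j f) : ℂ)) (inner ℂ g (S f)) :=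
      (innerSL ℂ g).hasSum (hS f)
    have h1' : HasSum (fun j => (inner ℂ (((ω j : ℂ) ^ 2) • P j f) g : ℂ)) (inner ℂ (S f) g) := by
      simpa [inner_conj_symm, mul_comm] using h1.star
    have h2 : HasSum (fun j => (inner ℂ f (((ω j : ℂ) ^ 2) • P j g) : ℂ)) (inner ℂ f (S g)) :=
      (innerSL ℂ f).hasSum (hS g)
    have heq : (fun j => (inner ℂ (((ω j : ℂ) ^ 2) • P j f) g : ℂ))
        = fun j => (inner ℂ f (((ω j : ℂ) ^ 2) • P j g) : ℂ) := by
      funext j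
      rw [inner_smul_left, inner_smul_right, ortho_inner_sym (hP j)]
      congr 1
      simp [← Complex.ofReal_pow]
    rw [heq] at h1'
    exact h1'.unique h2
  -- coercivity
  have hpos : ∀ f : H, A * ‖f‖ ^ 2 ≤ (inner ℂ (S f) f : ℂ).re := by
    intro f
    have h1 : HasSum (fun j => (inner ℂ f (((ω j : ℂ) ^ 2) • P j f) : ℂ)) (inner ℂ f (S f)) :=
      (innerSL ℂ f).hasSum (hS f)
    have heq : (fun j => (inner ℂ f (((ω j : ℂ) ^ 2) • P j f) : ℂ))
        = fun j => ((ω j ^ 2 * ‖P j f‖ ^ 2 : ℝ) : ℂ) := by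
      funext j
      rw [inner_smul_right, ← ortho_inner_sym (hP j), ortho_inner_left (hP j),
        inner_self_eq_norm_sq_to_K]
      norm_num [RCLike.ofReal_alg]
    rw [heq] at h1
    have h2 : HasSum (fun j => ω j ^ 2 * ‖P j f‖ ^ 2) ((inner ℂ f (S f) : ℂ).re) := by
      have := Complex.reCLM.hasSum h1
      simpa only [Complex.reCLM_apply, Complex.ofReal_re] using this
    have h3 : ∑' j, ω j ^ 2 * ‖P j f‖ ^ 2 = (inner ℂ f (S f) : ℂ).re := h2.tsum_eq
    have h4 : (inner ℂ (S f) f : ℂ).re = (inner ℂ f (S f) : ℂ).re := by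
      conv_lhs => rw [← inner_conj_symm (S f) f]
      exact Complex.conj_re _
    rw [h4, ← h3]
    exact (hf f).1
  -- lower norm bound
  have hlow : ∀ f : H, A * ‖f‖ ≤ ‖S f‖ := by
    intro f
    by_cases hf0 : f = 0
    · simp [hf0]
    · have hf' : 0 < ‖f‖ := norm_pos_iff.mpr hf0
      have h1 : A * ‖f‖ ^ 2 ≤ ‖S f‖ * ‖f‖ := by
        calc A * ‖f‖ ^ 2 ≤ (inner ℂ (S f) f : ℂ).re := hpos f
          _ ≤ ‖(inner ℂ (S f) f : ℂ)‖ := Complex.re_le_norm _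
          _ ≤ ‖S f‖ * ‖f‖ := norm_inner_le_norm _ _
      nlinarith
  have hanti : AntilipschitzWith (Real.toNNReal A⁻¹) S := by
    refine AddMonoidHomClass.antilipschitz_of_bound S fun x => ?_
    rw [Real.coe_toNNReal _ (by positivity)]
    rw [le_inv_mul_iff₀ hA]
    exact hlow x
  have hinj : Function.Injective S := hanti.injective
  have hclosed : IsClosed (Set.range S) := hanti.isClosed_range S.uniformContinuous
  have hKclosed : IsClosed ((LinearMap.range (S : H →ₗ[ℂ] H) : Submodule ℂ H) : Set H) := by
    have he : ((LinearMap.range (S : H →ₗ[ℂ] H) : Submodule ℂ H) : Set H) = Set.range S := by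
      ext x
      simp [LinearMap.mem_range, Set.mem_range]
    rw [he]
    exact hclosed
  haveI : CompleteSpace (LinearMap.range (S : H →ₗ[ℂ] H) : Submodule ℂ H) := hKclosed.completeSpace_coe
  have horth : (LinearMap.range (S : H →ₗ[ℂ] H) : Submodule ℂ H)ᗮ = ⊥ := by
    rw [Submodule.eq_bot_iff]
    intro g hg
    have h0 : (inner ℂ (S g) g : ℂ) = 0 :=
      (Submodule.mem_orthogonal _ g).mp hg (S g) (LinearMap.mem_range.mpr ⟨g, rfl⟩)
    have h1 := hpos g
    rw [h0] at h1
    simp only [Complex.zero_re] at h1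
    by_contra hne
    have hg' : 0 < ‖g‖ := norm_pos_iff.mpr hne
    nlinarith [mul_pos hA (pow_pos hg' 2)]
  have hsurj : Function.Surjective S :=
    LinearMap.range_eq_top.mp (Submodule.orthogonal_eq_bot_iff.mp horth)
  exact ⟨S, hS, ⟨hinj, hsurj⟩, hadj, fun f => le_trans (by positivity) (hpos f)⟩
end
end

section
/- Let ψ ∈ L²(ℝ) with ψ̂ bounded, supp ψ̂ ⊆ I finite, and C|γ|^β ≤ |ψ̂(γ)| ≤ D|γ|^α for γ in a neighborhood U of 0 (C, D, α, β > 0). Fix a > 1, N ∈ ℕ, ℓ_j ∈ {0,…,N−1}, and let J ∈ ℤ satisfy ([−a^{NJ}, −a^{N(J−1)}] ∪ [a^{N(J−1)}, a^{NJ}]) ⊂ U. Then for a.e. γ with |γ| ∈ [a^{N(j₀−1)}, a^{Nj₀}], there exists K > 0 (independent of γ, j₀) such that Σ_{j∈ℤ} |ψ̂(γ / a^{ℓ_j+Nj})|² ≤ D² a^{2αNJ} / (1 − a^{−2αN}) + K ‖ψ̂‖_∞², a finite upper bound independent of γ and of the choice of {ℓ_j}. -/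
open MeasureTheory

noncomputable section

/-- Dilation operator `D_a f(x) = a^{1/2} f(ax)` on functions on `ℝ`. -/
def Dil (a : ℝ) (f : ℝ → ℂ) : ℝ → ℂ := fun x => (Real.sqrt a : ℂ) * f (a * x)

/-- Translation operator `T_b f(x) = f(x - b)`. -/
def Tra (b : ℝ) (f : ℝ → ℂ) : ℝ → ℂ := fun x => f (x - b)

/-- Modulation operator `E_c f(x) = e^{2πicx} f(x)`. -/
def Mod' (c : ℝ) (f : ℝ → ℂ) : ℝ → ℂ :=
  fun x => Complex.exp (2 * Real.pi * Complex.I * c * x) * f x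

/-- The `L²(ℝ)` inner product `⟨f, g⟩ = ∫ f(x) conj(g(x)) dx`. -/
def L2inner (f g : ℝ → ℂ) : ℂ := ∫ x : ℝ, f x * (starRingEnd ℂ) (g x)

/-- The `L²(ℝ)` norm. -/
def L2norm (f : ℝ → ℂ) : ℝ := (eLpNorm f 2 volume).toReal

/-- A family of functions is a frame for `L²(ℝ)` with bounds `A, B`. -/
def IsFrame {ι : Type*} (g : ι → ℝ → ℂ) (A B : ℝ) : Prop :=
  0 < A ∧ 0 < B ∧ ∀ f : ℝ → ℂ, MemLp f 2 volume →
    A * L2norm f ^ 2 ≤ ∑' i, ‖L2inner f (g i)‖ ^ 2 ∧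
    ∑' i, ‖L2inner f (g i)‖ ^ 2 ≤ B * L2norm f ^ 2

theorem stmt19 (ψ : ℝ → ℂ) (hψ : MemLp ψ 2 volume) (M : ℝ)
    (hbdd : ∀ γ : ℝ, ‖FourierTransform.fourier ψ γ‖ ≤ M)
    (c d : ℝ) (hcd : c < d)
    (hsupp : Function.support (FourierTransform.fourier ψ) ⊆ Set.Icc c d)
    (C D α β : ℝ) (hC : 0 < C) (hD : 0 < D) (hα : 0 < α) (hβ : 0 < β)
    (U : Set ℝ) (hU : U ∈ nhds (0 : ℝ))
    (hloc : ∀ γ ∈ U, C * |γ| ^ β ≤ ‖FourierTransform.fourier ψ γ‖ ∧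
      ‖FourierTransform.fourier ψ γ‖ ≤ D * |γ| ^ α)
    (a : ℝ) (ha : 1 < a) (N : ℕ) (hN : 0 < N) (ℓ : ℤ → ℕ) (hℓ : ∀ j, ℓ j < N)
    (J : ℤ)
    (hJ : Set.Icc (-(a ^ ((N : ℝ) * (J : ℝ)))) (-(a ^ ((N : ℝ) * ((J : ℝ) - 1)))) ∪
          Set.Icc (a ^ ((N : ℝ) * ((J : ℝ) - 1))) (a ^ ((N : ℝ) * (J : ℝ))) ⊆ U) :
    ∃ K : ℕ, 0 < K ∧ ∀ j₀ : ℤ, ∀ᵐ γ : ℝ ∂volume,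
      |γ| ∈ Set.Icc (a ^ ((N : ℝ) * ((j₀ : ℝ) - 1))) (a ^ ((N : ℝ) * (j₀ : ℝ))) →
      ∑' j : ℤ, ‖FourierTransform.fourier ψ (γ / a ^ ((ℓ j : ℝ) + (N : ℝ) * (j : ℝ)))‖ ^ 2 ≤
        D ^ 2 * a ^ (2 * α * (N : ℝ) * (J : ℝ)) / (1 - a ^ (-(2 * α * (N : ℝ)))) +
          (K : ℝ) * M ^ 2 := by

  have ha0 : (0:ℝ) < a := lt_trans one_pos ha
  have hN' : (0:ℝ) < (N:ℝ) := by exact_mod_cast hN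
  obtain ⟨ε, hε, hball⟩ := Metric.mem_nhds_iff.mp hU
  have hq1 : a ^ (-(N:ℝ)) < 1 :=
    Real.rpow_lt_one_of_one_lt_of_neg ha (by linarith)
  obtain ⟨n₁, hn₁⟩ := exists_pow_lt_of_lt_one hε hq1
  set R : ℝ := max |c| |d| with hR
  obtain ⟨n₂, hn₂⟩ := pow_unbounded_of_one_lt R ha
  set S : ℕ := n₂ + 2 with hS
  set T : ℕ := n₁ + (-J).toNat with hT
  have hTJ : -(J:ℝ) ≤ (T:ℝ) := by
    have h1 : -J ≤ ((-J).toNat : ℤ) := Int.self_le_toNat _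
    have h2 : ((-J).toNat : ℤ) ≤ (T:ℤ) := by
      simp only [hT]; push_cast; omega
    exact_mod_cast h1.trans h2
  have hM0 : 0 ≤ M := (norm_nonneg _).trans (hbdd 0)
  refine ⟨S + T, by positivity, fun j₀ => Filter.Eventually.of_forall fun γ hγ => ?_⟩
  set r : ℝ := a ^ (-(2 * α * (N:ℝ))) with hrdef
  have hr0 : 0 < r := Real.rpow_pos_of_pos ha0 _
  have hr1 : r < 1 := Real.rpow_lt_one_of_one_lt_of_neg ha (by nlinarith)
  have h1r : 0 < 1 - r := by linarith
  have hmul : ∀ u v : ℝ, a ^ u * a ^ v = a ^ (u + v) := fun u v => (Real.rpow_add ha0 u v).symm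
  have hrpos : ∀ u : ℝ, 0 < a ^ u := fun u => Real.rpow_pos_of_pos ha0 u
  have hle : ∀ u v : ℝ, u ≤ v → a ^ u ≤ a ^ v := fun u v h =>
    (Real.rpow_le_rpow_left_iff ha).mpr h
  set F : ℤ → ℝ := fun j => ‖FourierTransform.fourier ψ (γ / a ^ ((ℓ j : ℝ) + (N : ℝ) * (j : ℝ)))‖ ^ 2
    with hF
  have habs : ∀ j : ℤ, |γ / a ^ ((ℓ j : ℝ) + (N : ℝ) * (j : ℝ))|
      = |γ| * a ^ (-((ℓ j : ℝ) + (N : ℝ) * (j : ℝ))) := by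
    intro j
    rw [abs_div, abs_of_pos (hrpos _), div_eq_mul_inv, ← Real.rpow_neg ha0.le]
  have hup : ∀ j : ℤ, |γ / a ^ ((ℓ j : ℝ) + (N : ℝ) * (j : ℝ))| ≤ a ^ ((N:ℝ) * ((j₀:ℝ) - (j:ℝ))) := by
    intro j
    rw [habs j]
    calc |γ| * a ^ (-((ℓ j : ℝ) + (N : ℝ) * (j : ℝ)))
        ≤ a ^ ((N:ℝ) * (j₀:ℝ)) * a ^ (-((ℓ j : ℝ) + (N : ℝ) * (j : ℝ))) :=
          mul_le_mul_of_nonneg_right hγ.2 (hrpos _).le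
      _ = a ^ ((N:ℝ) * (j₀:ℝ) + -((ℓ j : ℝ) + (N : ℝ) * (j : ℝ))) := hmul _ _
      _ ≤ a ^ ((N:ℝ) * ((j₀:ℝ) - (j:ℝ))) := by
          refine hle _ _ ?_
          have : (0:ℝ) ≤ (ℓ j : ℝ) := Nat.cast_nonneg _
          ring_nf
          linarith
  have hlow : ∀ j : ℤ, a ^ ((N:ℝ) * ((j₀:ℝ) - (j:ℝ) - 2) + 1)
      ≤ |γ / a ^ ((ℓ j : ℝ) + (N : ℝ) * (j : ℝ))| := by
    intro j
    rw [habs j]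
    have hℓj : (ℓ j : ℝ) ≤ (N:ℝ) - 1 := by
      have := hℓ j; have : (ℓ j : ℝ) + 1 ≤ (N:ℝ) := by exact_mod_cast this
      linarith
    calc a ^ ((N:ℝ) * ((j₀:ℝ) - (j:ℝ) - 2) + 1)
        ≤ a ^ ((N:ℝ) * ((j₀:ℝ) - 1) + -((ℓ j : ℝ) + (N : ℝ) * (j : ℝ))) := by
          refine hle _ _ ?_; ring_nf; linarith
      _ = a ^ ((N:ℝ) * ((j₀:ℝ) - 1)) * a ^ (-((ℓ j : ℝ) + (N : ℝ) * (j : ℝ))) := (hmul _ _).symm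
      _ ≤ |γ| * a ^ (-((ℓ j : ℝ) + (N : ℝ) * (j : ℝ))) :=
          mul_le_mul_of_nonneg_right hγ.1 (hrpos _).le
  -- tail bound
  have htail : ∀ j : ℤ, j₀ + (T:ℤ) ≤ j → F j ≤ D ^ 2 * a ^ (2 * α * (N:ℝ) * ((j₀:ℝ) - (j:ℝ))) := by
    intro j hj
    have hjr : (j₀:ℝ) + (T:ℝ) ≤ (j:ℝ) := by exact_mod_cast hj
    have hsmall : |γ / a ^ ((ℓ j : ℝ) + (N : ℝ) * (j : ℝ))| < ε := by
      calc |γ / a ^ ((ℓ j : ℝ) + (N : ℝ) * (j : ℝ))| ≤ a ^ ((N:ℝ) * ((j₀:ℝ) - (j:ℝ))) := hup j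
        _ ≤ a ^ (-(N:ℝ) * (n₁:ℝ)) := by
            refine hle _ _ ?_
            have hn : (n₁:ℝ) ≤ (T:ℝ) := by exact_mod_cast Nat.le_add_right n₁ _
            nlinarith
        _ = (a ^ (-(N:ℝ))) ^ n₁ := by
            rw [← Real.rpow_natCast (a ^ (-(N:ℝ))) n₁, ← Real.rpow_mul ha0.le]
        _ < ε := hn₁
    have hmem : γ / a ^ ((ℓ j : ℝ) + (N : ℝ) * (j : ℝ)) ∈ U := by
      apply hball
      rw [Metric.mem_ball, Real.dist_eq, sub_zero]
      exact hsmall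
    have hb := (hloc _ hmem).2
    have hb2 : ‖FourierTransform.fourier ψ (γ / a ^ ((ℓ j : ℝ) + (N : ℝ) * (j : ℝ)))‖
        ≤ D * (a ^ ((N:ℝ) * ((j₀:ℝ) - (j:ℝ)))) ^ α := by
      refine hb.trans (mul_le_mul_of_nonneg_left ?_ hD.le)
      exact Real.rpow_le_rpow (abs_nonneg _) (hup j) hα.le
    have hsq : F j ≤ (D * (a ^ ((N:ℝ) * ((j₀:ℝ) - (j:ℝ)))) ^ α) ^ 2 := by
      rw [hF]
      exact pow_le_pow_left₀ (norm_nonneg _) hb2 2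
    refine hsq.trans (le_of_eq ?_)
    rw [mul_pow, ← Real.rpow_natCast ((a ^ ((N:ℝ) * ((j₀:ℝ) - (j:ℝ)))) ^ α) 2,
      ← Real.rpow_mul (hrpos _).le, ← Real.rpow_mul ha0.le]
    push_cast
    ring_nf
  -- vanishing for small j
  have hzero : ∀ j : ℤ, j ≤ j₀ - (S:ℤ) → F j = 0 := by
    intro j hj
    have hjr : (j:ℝ) ≤ (j₀:ℝ) - (S:ℝ) := by exact_mod_cast hj
    have hbig : R < |γ / a ^ ((ℓ j : ℝ) + (N : ℝ) * (j : ℝ))| := by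
      calc R < a ^ n₂ := hn₂
        _ = a ^ ((n₂:ℕ):ℝ) := (Real.rpow_natCast a n₂).symm
        _ ≤ a ^ ((N:ℝ) * ((j₀:ℝ) - (j:ℝ) - 2) + 1) := by
            refine hle _ _ ?_
            have hS2 : ((S:ℝ)) = (n₂:ℝ) + 2 := by exact_mod_cast rfl
            have hN1 : (1:ℝ) ≤ (N:ℝ) := by exact_mod_cast hN
            have h1 : (n₂:ℝ) ≤ (j₀:ℝ) - (j:ℝ) - 2 := by linarith
            nlinarith [Nat.cast_nonneg (α := ℝ) n₂]
        _ ≤ |γ / a ^ ((ℓ j : ℝ) + (N : ℝ) * (j : ℝ))| := hlow j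
    have hnot : γ / a ^ ((ℓ j : ℝ) + (N : ℝ) * (j : ℝ)) ∉ Set.Icc c d := by
      intro hmem
      exact absurd (abs_le_max_abs_abs hmem.1 hmem.2) (not_le.mpr hbig)
    have : FourierTransform.fourier ψ (γ / a ^ ((ℓ j : ℝ) + (N : ℝ) * (j : ℝ))) = 0 := by
      by_contra h
      exact hnot (hsupp h)
    rw [hF]; simp [this]
  -- comparison functions
  set g₁ : ℤ → ℝ := fun j =>
    if j₀ + (T:ℤ) ≤ j then D ^ 2 * a ^ (2 * α * (N:ℝ) * ((j₀:ℝ) - (j:ℝ))) else 0 with hg₁def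
  set g₂ : ℤ → ℝ := fun j =>
    if j ∈ Finset.Ioo (j₀ - (S:ℤ)) (j₀ + (T:ℤ)) then M ^ 2 else 0 with hg₂def
  have hg₁nonneg : ∀ j, 0 ≤ g₁ j := by
    intro j; rw [hg₁def]; dsimp only
    split
    · positivity
    · exact le_refl 0
  have hg₂nonneg : ∀ j, 0 ≤ g₂ j := by
    intro j; rw [hg₂def]; dsimp only
    split
    · positivity
    · exact le_refl 0
  have hFbd : ∀ j, F j ≤ M ^ 2 := by
    intro j
    rw [hF]
    exact pow_le_pow_left₀ (norm_nonneg _) (hbdd _) 2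
  have hFnonneg : ∀ j, 0 ≤ F j := fun j => by rw [hF]; positivity
  have hfg : ∀ j, F j ≤ g₁ j + g₂ j := by
    intro j
    rcases le_or_gt (j₀ + (T:ℤ)) j with h | h
    · have : g₁ j = D ^ 2 * a ^ (2 * α * (N:ℝ) * ((j₀:ℝ) - (j:ℝ))) := by
        rw [hg₁def]; exact if_pos h
      calc F j ≤ D ^ 2 * a ^ (2 * α * (N:ℝ) * ((j₀:ℝ) - (j:ℝ))) := htail j h
        _ = g₁ j := this.symm
        _ ≤ g₁ j + g₂ j := le_add_of_nonneg_right (hg₂nonneg j)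
    · rcases le_or_gt j (j₀ - (S:ℤ)) with h' | h'
      · rw [hzero j h']
        exact add_nonneg (hg₁nonneg j) (hg₂nonneg j)
      · have : g₂ j = M ^ 2 := by
          rw [hg₂def]
          exact if_pos (Finset.mem_Ioo.mpr ⟨h', h⟩)
        calc F j ≤ M ^ 2 := hFbd j
          _ = g₂ j := this.symm
          _ ≤ g₁ j + g₂ j := le_add_of_nonneg_left (hg₁nonneg j)
  -- summability and sum of g₁
  set i : ℕ → ℤ := fun k => j₀ + (T:ℤ) + (k:ℤ) with hidef
  have hi : Function.Injective i := by
    intro k k' h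
    simpa only [hidef, add_right_inj, Int.natCast_inj] using h
  have hisupp : Function.support g₁ ⊆ Set.range i := by
    intro j hj
    rw [Function.mem_support, hg₁def] at hj
    by_cases h : j₀ + (T:ℤ) ≤ j
    · exact ⟨(j - (j₀ + T)).toNat, by simp only [hidef]; omega⟩
    · exact absurd (if_neg h) hj
  have key : ∀ k : ℕ, a ^ (2 * α * (N:ℝ) * ((j₀:ℝ) - ((j₀:ℝ) + (T:ℝ) + (k:ℝ))))
      = a ^ (-(2 * α * (N:ℝ) * (T:ℝ))) * r ^ k := by
    intro k
    rw [hrdef, ← Real.rpow_natCast (a ^ (-(2 * α * (N:ℝ)))) k, ← Real.rpow_mul ha0.le, hmul]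
    congr 1
    ring
  have hcomp : ∀ k : ℕ, g₁ (i k) = (D ^ 2 * a ^ (-(2 * α * (N:ℝ) * (T:ℝ)))) * r ^ k := by
    intro k
    rw [hg₁def, hidef]
    dsimp only
    rw [if_pos (by omega)]
    push_cast
    rw [key k]
    exact (mul_assoc _ _ _).symm
  have hgeom : Summable fun k : ℕ => (D ^ 2 * a ^ (-(2 * α * (N:ℝ) * (T:ℝ)))) * r ^ k :=
    (summable_geometric_of_lt_one hr0.le hr1).mul_left _
  have hg₁sum : Summable g₁ := by
    rw [← hi.summable_iff (fun x hx => Function.notMem_support.mp fun hs => hx (hisupp hs))]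
    exact hgeom.congr fun k => (hcomp k).symm
  have hg₁tsum : ∑' j, g₁ j = (D ^ 2 * a ^ (-(2 * α * (N:ℝ) * (T:ℝ)))) * (1 - r)⁻¹ := by
    rw [← hi.tsum_eq hisupp]
    calc ∑' k : ℕ, g₁ (i k) = ∑' k : ℕ, (D ^ 2 * a ^ (-(2 * α * (N:ℝ) * (T:ℝ)))) * r ^ k :=
          tsum_congr hcomp
      _ = (D ^ 2 * a ^ (-(2 * α * (N:ℝ) * (T:ℝ)))) * ∑' k : ℕ, r ^ k := tsum_mul_left
      _ = (D ^ 2 * a ^ (-(2 * α * (N:ℝ) * (T:ℝ)))) * (1 - r)⁻¹ := by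
          rw [tsum_geometric_of_lt_one hr0.le hr1]
  have hg₂sum : Summable g₂ := by
    apply summable_of_ne_finset_zero (s := Finset.Ioo (j₀ - (S:ℤ)) (j₀ + (T:ℤ)))
    intro b hb
    rw [hg₂def]
    exact if_neg hb
  have hg₂tsum : ∑' j, g₂ j ≤ ((S:ℝ) + T) * M ^ 2 := by
    rw [tsum_eq_sum (s := Finset.Ioo (j₀ - (S:ℤ)) (j₀ + (T:ℤ)))
      (fun b hb => by rw [hg₂def]; exact if_neg hb)]
    have hcard : ((Finset.Ioo (j₀ - (S:ℤ)) (j₀ + (T:ℤ))).card : ℝ) ≤ (S:ℝ) + T := by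
      rw [Int.card_Ioo]
      have : (j₀ + (T:ℤ) - (j₀ - (S:ℤ)) - 1).toNat ≤ S + T := by omega
      calc ((j₀ + (T:ℤ) - (j₀ - (S:ℤ)) - 1).toNat : ℝ) ≤ ((S + T : ℕ) : ℝ) := by exact_mod_cast this
        _ = (S:ℝ) + T := by push_cast; ring
    calc ∑ j ∈ Finset.Ioo (j₀ - (S:ℤ)) (j₀ + (T:ℤ)), g₂ j
        ≤ ∑ j ∈ Finset.Ioo (j₀ - (S:ℤ)) (j₀ + (T:ℤ)), M ^ 2 := by
          refine Finset.sum_le_sum fun j hj => ?_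
          rw [hg₂def]; dsimp only; rw [if_pos hj]
      _ = ((Finset.Ioo (j₀ - (S:ℤ)) (j₀ + (T:ℤ))).card : ℝ) * M ^ 2 := by
          rw [Finset.sum_const, nsmul_eq_mul]
      _ ≤ ((S:ℝ) + T) * M ^ 2 := mul_le_mul_of_nonneg_right hcard (by positivity)
  have hgsum : Summable (fun j => g₁ j + g₂ j) := hg₁sum.add hg₂sum
  have hFsum : Summable F := Summable.of_nonneg_of_le hFnonneg hfg hgsum
  have hg₁bd : ∑' j, g₁ j ≤ D ^ 2 * a ^ (2 * α * (N:ℝ) * (J:ℝ)) / (1 - r) := by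
    rw [hg₁tsum, div_eq_mul_inv]
    refine mul_le_mul_of_nonneg_right ?_ (by positivity)
    refine mul_le_mul_of_nonneg_left (hle _ _ ?_) (by positivity)
    have h2αN : (0:ℝ) < 2 * α * N := by positivity
    nlinarith
  calc ∑' j, F j ≤ ∑' j, (g₁ j + g₂ j) := Summable.tsum_le_tsum hfg hFsum hgsum
    _ = (∑' j, g₁ j) + ∑' j, g₂ j := Summable.tsum_add hg₁sum hg₂sum
    _ ≤ D ^ 2 * a ^ (2 * α * (N:ℝ) * (J:ℝ)) / (1 - r) + ((S:ℝ) + T) * M ^ 2 :=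
        add_le_add hg₁bd hg₂tsum
    _ = D ^ 2 * a ^ (2 * α * (N:ℝ) * (J:ℝ)) / (1 - a ^ (-(2 * α * (N:ℝ)))) + ((S + T : ℕ) : ℝ) * M ^ 2 := by
        rw [hrdef]; push_cast; ring
end
end
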